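/- Let M be a move set, let 1 ≤ q < q', and let z = (z_1, …, z_q) be a vertex of the inside-out polytope (([0,1]²)^q, A_M^q). Then the point z' = (z_1, …, z_q, (0,0), …, (0,0)) ∈ ([0,1]²)^{q'} obtained by appending q' − q pieces at the corner (0,0) is a vertex of (([0,1]²)^{q'}, A_M^{q'}), and Δ(z') = Δ(z). In particular, every denominator of a vertex for q pieces occurs as the denominator of a vertex for q' pieces. -/

import Mathlib

/-- A basic move: a nonzero integer vector with coprime coordinates. -/
def IsBasicMove (m : ℤ × ℤ) : Prop := m ≠ 0 ∧ Int.gcd m.1 m.2 = 1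

/-- Two integer vectors are parallel if one is a rational scalar multiple of the other. -/
def IntPara (a b : ℤ × ℤ) : Prop :=
  (∃ r : ℚ, (b.1 : ℚ) = r * a.1 ∧ (b.2 : ℚ) = r * a.2) ∨
  (∃ r : ℚ, (a.1 : ℚ) = r * b.1 ∧ (a.2 : ℚ) = r * b.2)

/-- A move set: a finite set of basic moves, no two of which are parallel. -/
def IsMoveSet (M : Finset (ℤ × ℤ)) : Prop :=
  (∀ m ∈ M, IsBasicMove m) ∧ ∀ m ∈ M, ∀ m' ∈ M, m ≠ m' → ¬ IntPara m m'

/-- The polytope ([0,1]²)^q of configurations of q pieces on the square board. -/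
def cube (q : ℕ) : Set (Fin q → ℝ × ℝ) :=
  {z | ∀ i, (z i).1 ∈ Set.Icc (0:ℝ) 1 ∧ (z i).2 ∈ Set.Icc (0:ℝ) 1}

/-- The move arrangement: hyperplanes (z_j - z_i)·(d,-c) = 0 for moves m = (c,d) ∈ M. -/
def moveHyps (M : Finset (ℤ × ℤ)) (q : ℕ) : Set (Set (Fin q → ℝ × ℝ)) :=
  {H | ∃ m ∈ M, ∃ i j : Fin q, i < j ∧
    H = {z | ((z j).1 - (z i).1) * (m.2 : ℝ) - ((z j).2 - (z i).2) * (m.1 : ℝ) = 0}}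

/-- The facet hyperplanes of the hypercube ([0,1]²)^q. -/
def facetHyps (q : ℕ) : Set (Set (Fin q → ℝ × ℝ)) :=
  {H | ∃ i : Fin q,
    H = {z | (z i).1 = 0} ∨ H = {z | (z i).1 = 1} ∨
    H = {z | (z i).2 = 0} ∨ H = {z | (z i).2 = 1}}

/-- A vertex of the inside-out polytope (([0,1]²)^q, A_M^q): a point of the cube such that
the intersection of all move hyperplanes and facet hyperplanes containing it is exactly it. -/
def IsVertex (M : Finset (ℤ × ℤ)) (q : ℕ) (z : Fin q → ℝ × ℝ) : Prop :=
  z ∈ cube q ∧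
  ⋂₀ {H | H ∈ moveHyps M q ∪ facetHyps q ∧ z ∈ H} = {z}

/-- `N` is a positive integer making `N • z` integral. -/
def IsIntegralizer (N : ℕ) {q : ℕ} (z : Fin q → ℝ × ℝ) : Prop :=
  0 < N ∧ ∀ i, (∃ a : ℤ, (N : ℝ) * (z i).1 = (a : ℝ)) ∧ (∃ b : ℤ, (N : ℝ) * (z i).2 = (b : ℝ))

/-- The denominator Δ(z): the least positive integer N with N • z integral. -/
noncomputable def denom {q : ℕ} (z : Fin q → ℝ × ℝ) : ℕ := sInf {N | IsIntegralizer N z}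

/-- The number of nonattacking configurations of q riders with move set M on the n×n board. -/
noncomputable def uCount (M : Finset (ℤ × ℤ)) (q n : ℕ) : ℕ :=
  Nat.card {S : Finset (ℤ × ℤ) //
    (∀ p ∈ S, p ∈ Finset.Icc (1 : ℤ) n ×ˢ Finset.Icc (1 : ℤ) n) ∧ S.card = q ∧
    ∀ a ∈ S, ∀ b ∈ S, a ≠ b → ∀ m ∈ M, ¬ ∃ t : ℤ, b - a = t • m}

theorem stmt1 (M : Finset (ℤ × ℤ)) (hM : IsMoveSet M) (q q' : ℕ) (hq : 1 ≤ q) (hqq' : q < q')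
    (z : Fin q → ℝ × ℝ) (hz : IsVertex M q z) :
    IsVertex M q' (fun i : Fin q' => if h : (i : ℕ) < q then z ⟨i, h⟩ else ((0 : ℝ), (0 : ℝ))) ∧
    denom (fun i : Fin q' => if h : (i : ℕ) < q then z ⟨i, h⟩ else ((0 : ℝ), (0 : ℝ))) = denom z := by
  have hle : q ≤ q' := le_of_lt hqq'
  set f : Fin q' → ℝ × ℝ :=
    fun i : Fin q' => if h : (i : ℕ) < q then z ⟨i, h⟩ else ((0 : ℝ), (0 : ℝ)) with hf
  have hfz : ∀ i : Fin q, f (Fin.castLE hle i) = z i := by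
    intro i
    have hi : ((Fin.castLE hle i : Fin q') : ℕ) < q := i.isLt
    simp only [hf, dif_pos hi]
    exact congrArg z (Fin.ext rfl)
  constructor
  · constructor
    · intro i
      by_cases h : (i : ℕ) < q
      · simp only [hf, dif_pos h]
        exact hz.1 ⟨i, h⟩
      · simp only [hf, dif_neg h]
        exact ⟨⟨le_refl 0, zero_le_one⟩, ⟨le_refl 0, zero_le_one⟩⟩
    · ext w
      simp only [Set.mem_sInter, Set.mem_setOf_eq, Set.mem_singleton_iff]
      constructor
      · intro hw
        have hwq : (fun i : Fin q => w (Fin.castLE hle i)) = z := by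
          have hmem : (fun i : Fin q => w (Fin.castLE hle i)) ∈
              ⋂₀ {H | H ∈ moveHyps M q ∪ facetHyps q ∧ z ∈ H} := by
            intro H hH
            obtain ⟨hHmem, hzH⟩ := hH
            rcases hHmem with hmov | hfac
            · obtain ⟨m, hm, i, j, hij, rfl⟩ := hmov
              have hij' : Fin.castLE hle i < Fin.castLE hle j := by
                exact hij
              have h1 : ({v : Fin q' → ℝ × ℝ |
                  ((v (Fin.castLE hle j)).1 - (v (Fin.castLE hle i)).1) * (m.2 : ℝ)
                  - ((v (Fin.castLE hle j)).2 - (v (Fin.castLE hle i)).2) * (m.1 : ℝ) = 0})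
                  ∈ moveHyps M q' :=
                ⟨m, hm, Fin.castLE hle i, Fin.castLE hle j, hij', rfl⟩
              have h2 : f ∈ {v : Fin q' → ℝ × ℝ |
                  ((v (Fin.castLE hle j)).1 - (v (Fin.castLE hle i)).1) * (m.2 : ℝ)
                  - ((v (Fin.castLE hle j)).2 - (v (Fin.castLE hle i)).2) * (m.1 : ℝ) = 0} := by
                show _ = (0:ℝ)
                rw [hfz, hfz]
                exact hzH
              exact hw _ ⟨Or.inl h1, h2⟩
            · obtain ⟨i, hcases⟩ := hfac
              rcases hcases with rfl | rfl | rfl | rfl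
              · exact hw {v | (v (Fin.castLE hle i)).1 = 0}
                  ⟨Or.inr ⟨Fin.castLE hle i, Or.inl rfl⟩, by show (f _).1 = 0; rw [hfz]; exact hzH⟩
              · exact hw {v | (v (Fin.castLE hle i)).1 = 1}
                  ⟨Or.inr ⟨Fin.castLE hle i, Or.inr (Or.inl rfl)⟩,
                   by show (f _).1 = 1; rw [hfz]; exact hzH⟩
              · exact hw {v | (v (Fin.castLE hle i)).2 = 0}
                  ⟨Or.inr ⟨Fin.castLE hle i, Or.inr (Or.inr (Or.inl rfl))⟩,
                   by show (f _).2 = 0; rw [hfz]; exact hzH⟩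
              · exact hw {v | (v (Fin.castLE hle i)).2 = 1}
                  ⟨Or.inr ⟨Fin.castLE hle i, Or.inr (Or.inr (Or.inr rfl))⟩,
                   by show (f _).2 = 1; rw [hfz]; exact hzH⟩
          have := hz.2 ▸ hmem
          exact this
        funext j
        by_cases hj : (j : ℕ) < q
        · have hcast : Fin.castLE hle ⟨(j : ℕ), hj⟩ = j := by
            apply Fin.ext; rfl
          have := congrFun hwq ⟨(j : ℕ), hj⟩
          rw [hcast] at this
          rw [this]
          simp only [hf, dif_pos hj]
        · have h1 : (w j).1 = 0 :=
            hw {v | (v j).1 = 0} ⟨Or.inr ⟨j, Or.inl rfl⟩, by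
              show (f j).1 = 0; simp only [hf, dif_neg hj]⟩
          have h2 : (w j).2 = 0 :=
            hw {v | (v j).2 = 0} ⟨Or.inr ⟨j, Or.inr (Or.inr (Or.inl rfl))⟩, by
              show (f j).2 = 0; simp only [hf, dif_neg hj]⟩
          have : f j = ((0:ℝ), (0:ℝ)) := by simp only [hf, dif_neg hj]
          rw [this]
          exact Prod.ext h1 h2
      · rintro rfl
        intro H hH
        exact hH.2
  · have hset : {N | IsIntegralizer N f} = {N | IsIntegralizer N z} := by
      ext N
      simp only [Set.mem_setOf_eq, IsIntegralizer]
      constructor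
      · rintro ⟨hN, hN2⟩
        refine ⟨hN, fun i => ?_⟩
        have := hN2 (Fin.castLE hle i)
        rwa [hfz] at this
      · rintro ⟨hN, hN2⟩
        refine ⟨hN, fun i => ?_⟩
        by_cases h : (i : ℕ) < q
        · have := hN2 ⟨i, h⟩
          simpa only [hf, dif_pos h] using this
        · simp only [hf, dif_neg h]
          exact ⟨⟨0, by simp⟩, ⟨0, by simp⟩⟩
    unfold denom
    rw [hset]
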